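/- Fix T ≥ 1, n ≥ m ≥ 0 and unitaries C_1,…,C_T on H_state = (ℂ²)^{⊗n}. Then the unary-clock Feynman–Kitaev Hamiltonian H' = H_in + H_prop + H_stab on H_time ⊗ H_state is positive semidefinite, and its kernel is exactly the set of history states: ker H' = { Ψ_ξ : ξ ∈ (ℂ²)^{⊗m} } (a subspace, since ξ ↦ Ψ_ξ is linear). In particular the ground energy of H' is 0 and every zero-energy state is a history state of the circuit C_T⋯C_1 on an input of the form ξ ⊗ |0⟩^{⊗(n−m)}. -/

import Mathlib

open scoped Classical ComplexOrder
open Matrix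

noncomputable section
namespace FK

/-- The unary clock state `unary(t)` on `T` clock qubits: `c_s = 1` for the first `t`
qubits (`0`-based: positions `s < t`) and `0` afterwards. -/
def unaryClock (T t : ℕ) : Fin T → Fin 2 := fun s => if (s : ℕ) < t then 1 else 0

/-- The product `C_t ⋯ C_1` of the first `t` gates (empty product = identity). -/
def prodMat {ι : Type} [Fintype ι] [DecidableEq ι]
    (C : ℕ → Matrix ι ι ℂ) : ℕ → Matrix ι ι ℂ
  | 0 => 1
  | t + 1 => C (t + 1) * prodMat C t

/-- The injection `ξ ↦ ξ ⊗ |0⟩^{⊗(n-m)}` of an `m`-qubit vector into `n` qubits. -/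
def inject (n m : ℕ) (hmn : m ≤ n) (ξ : (Fin m → Fin 2) → ℂ) :
    (Fin n → Fin 2) → ℂ :=
  fun b =>
    if ∀ i : Fin n, m ≤ (i : ℕ) → b i = 0 then ξ (fun j => b (Fin.castLE hmn j)) else 0

/-- The history state `Ψ_ξ = (1/√(T+1)) Σ_t |unary(t)⟩ ⊗ C_t⋯C_1 (ξ ⊗ |0⟩^{⊗(n-m)})`. -/
def historyState (T n m : ℕ) (hmn : m ≤ n)
    (C : ℕ → Matrix (Fin n → Fin 2) (Fin n → Fin 2) ℂ)
    (ξ : (Fin m → Fin 2) → ℂ) :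
    ((Fin T → Fin 2) × (Fin n → Fin 2)) → ℂ :=
  fun p => (Real.sqrt (T + 1) : ℂ)⁻¹ *
    ∑ t ∈ Finset.range (T + 1),
      (if p.1 = unaryClock T t then 1 else 0) *
        (prodMat C t).mulVec (inject n m hmn ξ) p.2

/-- Kronecker product of a time-register operator and a state-register operator. -/
def kron {τ σ : Type} (Mt : Matrix τ τ ℂ) (Ms : Matrix σ σ ℂ) :
    Matrix (τ × σ) (τ × σ) ℂ :=
  fun p r => Mt p.1 r.1 * Ms p.2 r.2

/-- `H_in = |0⟩⟨0|_{c_1} ⊗ Σ_{s=m+1}^{n} |1⟩⟨1|_{state(s)}`. -/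
def Hin (T n m : ℕ) (hT : 0 < T) :
    Matrix ((Fin T → Fin 2) × (Fin n → Fin 2)) ((Fin T → Fin 2) × (Fin n → Fin 2)) ℂ :=
  Matrix.diagonal (fun p =>
    if p.1 ⟨0, hT⟩ = 0 then
      ((Finset.univ.filter (fun s : Fin n => m ≤ (s : ℕ) ∧ p.2 s = 1)).card : ℂ)
    else 0)

/-- `H_stab = Σ_{s=1}^{T-1} |0⟩⟨0|_{c_s}|1⟩⟨1|_{c_{s+1}} ⊗ I` (`0`-based: pairs
`(s, s+1)` for `s = 0, …, T-2`). -/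
def Hstab (T n : ℕ) :
    Matrix ((Fin T → Fin 2) × (Fin n → Fin 2)) ((Fin T → Fin 2) × (Fin n → Fin 2)) ℂ :=
  ∑ s ∈ Finset.range (T - 1),
    Matrix.diagonal (fun p =>
      if h : s + 1 < T then
        (if p.1 ⟨s, Nat.lt_of_succ_lt h⟩ = 0 ∧ p.1 ⟨s + 1, h⟩ = 1 then 1 else 0)
      else 0)

/-- The clock-transition operator `A_{t,t-1}` for `t = a+1` (so `c_t` is the clock qubit
with `0`-based index `a`): it acts as `|1⟩⟨0|` on `c_t`, as `|1⟩⟨1|` on `c_{t-1}` (omitted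
when `t = 1`), as `|0⟩⟨0|` on `c_{t+1}` (omitted when `t = T`), and as the identity on the
remaining clock qubits. -/
def Aop (T : ℕ) (a : Fin T) : Matrix (Fin T → Fin 2) (Fin T → Fin 2) ℂ :=
  fun u v =>
    if (u a = 1 ∧ v a = 0 ∧ (∀ s : Fin T, s ≠ a → u s = v s) ∧
        (∀ _ : 1 ≤ (a : ℕ),
          v ⟨(a : ℕ) - 1, Nat.lt_of_le_of_lt (Nat.sub_le _ _) a.isLt⟩ = 1) ∧
        (∀ h : (a : ℕ) + 1 < T, v ⟨(a : ℕ) + 1, h⟩ = 0)) then 1 else 0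

/-- `H_prop = Σ_{t=1}^{T} (1/2)[(A_{t,t} + A_{t-1,t-1}) ⊗ I - A_{t,t-1} ⊗ C_t
 - A_{t,t-1}† ⊗ C_t†]`, with `A_{t,t} = A_{t,t-1}A_{t,t-1}†` and
`A_{t-1,t-1} = A_{t,t-1}†A_{t,t-1}`. -/
def Hprop (T n : ℕ) (C : ℕ → Matrix (Fin n → Fin 2) (Fin n → Fin 2) ℂ) :
    Matrix ((Fin T → Fin 2) × (Fin n → Fin 2)) ((Fin T → Fin 2) × (Fin n → Fin 2)) ℂ :=
  ∑ a : Fin T, (1 / 2 : ℂ) •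
    (kron (Aop T a * (Aop T a)ᴴ + (Aop T a)ᴴ * Aop T a) 1
      - kron (Aop T a) (C ((a : ℕ) + 1))
      - kron ((Aop T a)ᴴ) ((C ((a : ℕ) + 1))ᴴ))

section AuxA

variable {T : ℕ}

lemma fin2_cases (x : Fin 2) : x = 0 ∨ x = 1 := by omega

lemma unaryClock_one_iff {t : ℕ} (s : Fin T) : unaryClock T t s = 1 ↔ (s : ℕ) < t := by
  unfold unaryClock; split <;> simp_all

lemma unaryClock_zero_iff {t : ℕ} (s : Fin T) : unaryClock T t s = 0 ↔ t ≤ (s : ℕ) := by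
  unfold unaryClock; split <;> simp_all

lemma unaryClock_inj {t t' : ℕ} (ht : t ≤ T) (ht' : t' ≤ T) (h : unaryClock T t = unaryClock T t') :
    t = t' := by
  by_contra hne
  rcases Nat.lt_or_ge t t' with hlt | hge
  · have hs : t < T := lt_of_lt_of_le hlt ht'
    have h2 := congrFun h ⟨t, hs⟩
    have e0 : unaryClock T t ⟨t, hs⟩ = 0 := (unaryClock_zero_iff _).2 (le_refl t)
    have e1 : unaryClock T t' ⟨t, hs⟩ = 1 := (unaryClock_one_iff _).2 hlt
    rw [e0, e1] at h2; exact absurd h2 (by decide)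
  · have hlt : t' < t := by omega
    have hs : t' < T := lt_of_lt_of_le hlt ht
    have h2 := congrFun h ⟨t', hs⟩
    have e0 : unaryClock T t' ⟨t', hs⟩ = 0 := (unaryClock_zero_iff _).2 (le_refl t')
    have e1 : unaryClock T t ⟨t', hs⟩ = 1 := (unaryClock_one_iff _).2 hlt
    rw [e0, e1] at h2; exact absurd h2 (by decide)

/-- unary clocks have no `0,1` pattern -/
lemma unaryClock_no01 {t : ℕ} {s : ℕ} (h : s + 1 < T) :
    ¬(unaryClock T t ⟨s, Nat.lt_of_succ_lt h⟩ = 0 ∧ unaryClock T t ⟨s + 1, h⟩ = 1) := by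
  rintro ⟨h0, h1⟩
  rw [unaryClock_zero_iff] at h0
  rw [unaryClock_one_iff] at h1
  simp at h0 h1; omega

/-- a clock with no `0,1` pattern is unary -/
lemma isUnary_of_no01 {u : Fin T → Fin 2}
    (h : ∀ s : ℕ, ∀ hs : s + 1 < T, ¬(u ⟨s, Nat.lt_of_succ_lt hs⟩ = 0 ∧ u ⟨s + 1, hs⟩ = 1)) :
    ∃ t ≤ T, u = unaryClock T t := by
  have dc : ∀ k : ℕ, ∀ hk : k < T, u ⟨k, hk⟩ = 1 → ∀ j : ℕ, j ≤ k → ∀ hj : j < T, u ⟨j, hj⟩ = 1 := by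
    intro k
    induction k with
    | zero =>
      intro hk h1 j hj hjT
      have hj0 : j = 0 := by omega
      subst hj0; exact h1
    | succ k ih =>
      intro hk h1 j hj hjT
      have hk' : k < T := by omega
      have hprev : u ⟨k, hk'⟩ = 1 := by
        rcases fin2_cases (u ⟨k, hk'⟩) with h0 | h1'
        · exact absurd ⟨h0, h1⟩ (h k hk)
        · exact h1'
      rcases Nat.lt_or_ge j (k + 1) with hlt | hge
      · exact ih hk' hprev j (by omega) hjT
      · have : j = k + 1 := by omega
        subst this; exact h1
  set S : Finset (Fin T) := Finset.univ.filter (fun s => u s = 1) with hS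
  refine ⟨S.card, le_trans (Finset.card_le_univ S) (by simp), ?_⟩
  funext s
  rcases fin2_cases (u s) with h0 | h1
  · rw [h0, eq_comm]
    rw [unaryClock_zero_iff]
    have hsub : S ⊆ Finset.Iio s := by
      intro x hx
      simp only [hS, Finset.mem_filter] at hx
      rw [Finset.mem_Iio]
      by_contra hxs
      push_neg at hxs
      have hx1 : u ⟨(s : ℕ), s.isLt⟩ = 1 :=
        dc (x : ℕ) x.isLt (by simpa using hx.2) (s : ℕ) (by exact_mod_cast hxs) s.isLt
      rw [show (⟨(s : ℕ), s.isLt⟩ : Fin T) = s from Fin.eta s s.isLt] at hx1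
      rw [h0] at hx1; exact absurd hx1 (by decide)
    calc S.card ≤ (Finset.Iio s).card := Finset.card_le_card hsub
    _ = (s : ℕ) := by simp
  · rw [h1, eq_comm]
    rw [unaryClock_one_iff]
    have hsub : Finset.Iic s ⊆ S := by
      intro x hx
      simp only [hS, Finset.mem_filter]
      refine ⟨Finset.mem_univ x, ?_⟩
      have := dc (s : ℕ) s.isLt (by simpa using h1) (x : ℕ) (by simpa using hx) x.isLt
      simpa using this
    have hcard : (s : ℕ) + 1 ≤ S.card := by
      calc (s : ℕ) + 1 = (Finset.Iic s).card := by simp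
      _ ≤ S.card := Finset.card_le_card hsub
    omega

end AuxA

section AuxB
variable {T : ℕ}

lemma unaryClock_one_iff' {t : ℕ} (s : Fin T) : unaryClock T t s = 1 ↔ (s : ℕ) < t := by
  unfold unaryClock; split <;> simp_all

lemma unaryClock_zero_iff' {t : ℕ} (s : Fin T) : unaryClock T t s = 0 ↔ t ≤ (s : ℕ) := by
  unfold unaryClock; split <;> simp_all

/-- side conditions on the source clock of `A_{t,t-1}` -/
def Acond (T : ℕ) (a : Fin T) (v : Fin T → Fin 2) : Prop :=
  v a = 0 ∧
  (∀ _ : 1 ≤ (a : ℕ),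
    v ⟨(a : ℕ) - 1, Nat.lt_of_le_of_lt (Nat.sub_le _ _) a.isLt⟩ = 1) ∧
  (∀ h : (a : ℕ) + 1 < T, v ⟨(a : ℕ) + 1, h⟩ = 0)

lemma aop_apply (a : Fin T) (u v : Fin T → Fin 2) :
    Aop T a u v = if u = Function.update v a 1 ∧ Acond T a v then 1 else 0 := by
  unfold Aop Acond
  have hiff : (u a = 1 ∧ v a = 0 ∧ (∀ s : Fin T, s ≠ a → u s = v s) ∧
        (∀ _ : 1 ≤ (a : ℕ),
          v ⟨(a : ℕ) - 1, Nat.lt_of_le_of_lt (Nat.sub_le _ _) a.isLt⟩ = 1) ∧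
        (∀ h : (a : ℕ) + 1 < T, v ⟨(a : ℕ) + 1, h⟩ = 0)) ↔
      (u = Function.update v a 1 ∧ (v a = 0 ∧
      (∀ _ : 1 ≤ (a : ℕ),
        v ⟨(a : ℕ) - 1, Nat.lt_of_le_of_lt (Nat.sub_le _ _) a.isLt⟩ = 1) ∧
      (∀ h : (a : ℕ) + 1 < T, v ⟨(a : ℕ) + 1, h⟩ = 0))) := by
    constructor
    · rintro ⟨h1, h2, h3, h4, h5⟩
      refine ⟨funext fun s => ?_, h2, h4, h5⟩
      by_cases hs : s = a
      · subst hs; rw [Function.update_self]; exact h1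
      · rw [Function.update_of_ne hs]; exact h3 s hs
    · rintro ⟨rfl, h2, h4, h5⟩
      exact ⟨Function.update_self _ _ _, h2,
        fun s hs => Function.update_of_ne hs _ _, h4, h5⟩
  by_cases h : u = Function.update v a 1 ∧ (v a = 0 ∧
      (∀ _ : 1 ≤ (a : ℕ),
        v ⟨(a : ℕ) - 1, Nat.lt_of_le_of_lt (Nat.sub_le _ _) a.isLt⟩ = 1) ∧
      (∀ h : (a : ℕ) + 1 < T, v ⟨(a : ℕ) + 1, h⟩ = 0))
  · rw [if_pos (hiff.mpr h), if_pos h]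
  · rw [if_neg (fun hh => h (hiff.mp hh)), if_neg h]

lemma conjTranspose_aop_apply (a : Fin T) (u v : Fin T → Fin 2) :
    (Aop T a)ᴴ u v = if v = Function.update u a 1 ∧ Acond T a u then 1 else 0 := by
  rw [conjTranspose_apply, aop_apply]
  split <;> simp

lemma update_eq_update {v w : Fin T → Fin 2} {a : Fin T}
    (h : Function.update v a (1 : Fin 2) = Function.update w a 1)
    (hv : v a = 0) (hw : w a = 0) : v = w := by
  funext s
  by_cases hs : s = a
  · subst hs; rw [hv, hw]
  · have := congrFun h s
    rwa [Function.update_of_ne hs, Function.update_of_ne hs] at this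

lemma ahA (a : Fin T) :
    (Aop T a)ᴴ * Aop T a
      = Matrix.diagonal (fun v => if Acond T a v then (1 : ℂ) else 0) := by
  ext v w
  simp only [mul_apply, conjTranspose_aop_apply, aop_apply]
  have hterm : ∀ u : Fin T → Fin 2,
      (if u = Function.update v a 1 ∧ Acond T a v then (1:ℂ) else 0) *
        (if u = Function.update w a 1 ∧ Acond T a w then 1 else 0)
      = if u = Function.update v a 1 then (if Acond T a v ∧ v = w then (1:ℂ) else 0) else 0 := by
    intro u
    by_cases h1 : u = Function.update v a 1 ∧ Acond T a v
    · by_cases hw : v = w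
      · subst hw
        rw [if_pos h1, if_pos h1.1, if_pos ⟨h1.2, rfl⟩, one_mul]
      · have h2 : ¬(u = Function.update w a 1 ∧ Acond T a w) := by
          rintro ⟨h2u, h2c⟩
          have hupd : Function.update v a 1 = Function.update w a 1 := by
            rw [← h1.1, h2u]
          exact hw (update_eq_update hupd h1.2.1 h2c.1)
        rw [if_pos h1, if_neg h2, if_pos h1.1, if_neg (fun hh => hw hh.2), mul_zero]
    · rcases Classical.em (u = Function.update v a 1) with he | he
      · have hnc : ¬ Acond T a v := fun hc => h1 ⟨he, hc⟩
        rw [if_neg h1, zero_mul, if_pos he, if_neg (fun hh => hnc hh.1)]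
      · rw [if_neg h1, zero_mul, if_neg he]
  rw [Finset.sum_congr rfl (fun u _ => hterm u)]
  rw [Finset.sum_ite_eq' Finset.univ (Function.update v a 1)
    (fun _ => if Acond T a v ∧ v = w then (1:ℂ) else 0)]
  rw [if_pos (Finset.mem_univ _), Matrix.diagonal_apply]
  by_cases hvw : v = w <;> by_cases hc : Acond T a v <;> simp [hvw, hc]

lemma aop_mul_ahA (a : Fin T) :
    Aop T a * ((Aop T a)ᴴ * Aop T a) = Aop T a := by
  rw [ahA]
  ext u w
  rw [Matrix.mul_diagonal, aop_apply]
  by_cases h : u = Function.update w a 1 ∧ Acond T a w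
  · rw [if_pos h, if_pos h.2, one_mul]
  · rw [if_neg h, zero_mul]

lemma ahA_mul_aop_hA (a : Fin T) :
    ((Aop T a)ᴴ * Aop T a) * (Aop T a)ᴴ = (Aop T a)ᴴ := by
  have h := congrArg Matrix.conjTranspose (aop_mul_ahA a)
  simpa only [Matrix.conjTranspose_mul, Matrix.conjTranspose_conjTranspose,
    Matrix.mul_assoc] using h

lemma ahA_mul_ahA (a : Fin T) :
    ((Aop T a)ᴴ * Aop T a) * ((Aop T a)ᴴ * Aop T a) = (Aop T a)ᴴ * Aop T a := by
  calc ((Aop T a)ᴴ * Aop T a) * ((Aop T a)ᴴ * Aop T a)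
      = (Aop T a)ᴴ * (Aop T a * ((Aop T a)ᴴ * Aop T a)) := by
        rw [Matrix.mul_assoc]
    _ = (Aop T a)ᴴ * Aop T a := by rw [aop_mul_ahA]

section Kron
variable {τ σ : Type} [Fintype τ] [Fintype σ] [DecidableEq τ] [DecidableEq σ]

lemma kron_mul (M M' : Matrix τ τ ℂ) (N N' : Matrix σ σ ℂ) :
    kron M N * kron M' N' = kron (M * M') (N * N') := by
  ext p r
  simp only [kron, mul_apply, Fintype.sum_prod_type, Finset.sum_mul, Finset.mul_sum]
  rw [Finset.sum_comm]
  refine Finset.sum_congr rfl fun q1 _ => Finset.sum_congr rfl fun q2 _ => by ring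

lemma kron_conjTranspose (M : Matrix τ τ ℂ) (N : Matrix σ σ ℂ) :
    (kron M N)ᴴ = kron Mᴴ Nᴴ := by
  ext p r
  simp only [kron, conjTranspose_apply, star_mul', mul_comm]

lemma kron_add_left (M M' : Matrix τ τ ℂ) (N : Matrix σ σ ℂ) :
    kron (M + M') N = kron M N + kron M' N := by
  ext p r
  simp only [kron, Matrix.add_apply, add_mul]

lemma kron_diagonal_one (d : τ → ℂ) :
    kron (Matrix.diagonal d) (1 : Matrix σ σ ℂ) =
      Matrix.diagonal (fun p : τ × σ => d p.1) := by
  ext p r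
  by_cases h1 : p.1 = r.1 <;> by_cases h2 : p.2 = r.2
  · have : p = r := Prod.ext h1 h2
    subst this
    simp [kron, Matrix.diagonal_apply, Matrix.one_apply]
  · simp [kron, Matrix.diagonal_apply, Matrix.one_apply, h1, h2, Prod.ext_iff]
  · simp [kron, Matrix.diagonal_apply, Matrix.one_apply, h1, h2, Prod.ext_iff]
  · simp [kron, Matrix.diagonal_apply, Matrix.one_apply, h1, h2, Prod.ext_iff]

end Kron
lemma acond_unaryClock_self (a : Fin T) : Acond T a (unaryClock T (a : ℕ)) := by
  refine ⟨(unaryClock_zero_iff' a).2 (le_refl _), fun h1 => ?_, fun h => ?_⟩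
  · rw [unaryClock_one_iff']
    show (a : ℕ) - 1 < (a : ℕ)
    omega
  · rw [unaryClock_zero_iff']
    show (a : ℕ) ≤ (a : ℕ) + 1
    omega

lemma acond_unaryClock_iff (a : Fin T) {t : ℕ} (ht : t ≤ T) :
    Acond T a (unaryClock T t) ↔ t = (a : ℕ) := by
  constructor
  · rintro ⟨h0, h1, _⟩
    rw [unaryClock_zero_iff'] at h0
    rcases Nat.eq_zero_or_pos (a : ℕ) with ha | ha
    · omega
    · have h2 := h1 ha
      rw [unaryClock_one_iff'] at h2
      have h3 : (a : ℕ) - 1 < t := h2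
      omega
  · rintro rfl; exact acond_unaryClock_self a

lemma update_unaryClock (a : Fin T) :
    Function.update (unaryClock T (a : ℕ)) a (1 : Fin 2) = unaryClock T ((a : ℕ) + 1) := by
  funext s
  by_cases hs : s = a
  · subst hs
    rw [Function.update_self, eq_comm]
    exact (unaryClock_one_iff' _).2 (by omega)
  · rw [Function.update_of_ne hs]
    have hsa : (s : ℕ) ≠ (a : ℕ) := fun h => hs (Fin.ext h)
    unfold unaryClock
    by_cases h : (s : ℕ) < (a : ℕ)
    · rw [if_pos h, if_pos (by omega)]
    · rw [if_neg h, if_neg (by omega)]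

lemma acond_update_eq_unary {a : Fin T} {v : Fin T → Fin 2} {t : ℕ}
    (hc : Acond T a v) (h : Function.update v a 1 = unaryClock T t) (ht : t ≤ T) :
    v = unaryClock T (a : ℕ) ∧ t = (a : ℕ) + 1 := by
  have hat : (a : ℕ) < t := by
    have := congrFun h a
    rw [Function.update_self, eq_comm, unaryClock_one_iff'] at this
    exact this
  have htle : t ≤ (a : ℕ) + 1 := by
    by_cases hT' : (a : ℕ) + 1 < T
    · have h2 := congrFun h ⟨(a : ℕ) + 1, hT'⟩
      have hne : (⟨(a : ℕ) + 1, hT'⟩ : Fin T) ≠ a := by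
        intro hh
        have h3 := congrArg Fin.val hh
        exact absurd (show (a : ℕ) + 1 = (a : ℕ) from h3) (by omega)
      rw [Function.update_of_ne hne, hc.2.2 hT'] at h2
      rw [eq_comm, unaryClock_zero_iff'] at h2
      exact h2
    · omega
  have hta : t = (a : ℕ) + 1 := by omega
  subst hta
  refine ⟨?_, rfl⟩
  funext s
  by_cases hs : s = a
  · subst hs
    rw [hc.1, eq_comm, unaryClock_zero_iff']
  · have h2 := congrFun h s
    rw [Function.update_of_ne hs] at h2
    rw [h2]
    have hsa : (s : ℕ) ≠ (a : ℕ) := fun hh => hs (Fin.ext hh)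
    unfold unaryClock
    by_cases hlt : (s : ℕ) < (a : ℕ)
    · rw [if_pos (by omega), if_pos hlt]
    · rw [if_neg (by omega), if_neg hlt]

end AuxB

section Main
variable {T n m : ℕ}

lemma sum_mulVec' {ι κ : Type} [Fintype κ] (s : Finset ι) (M : ι → Matrix κ κ ℂ) (v : κ → ℂ) :
    (∑ i ∈ s, M i) *ᵥ v = ∑ i ∈ s, M i *ᵥ v := by
  ext j
  simp only [Matrix.mulVec, dotProduct, Matrix.sum_apply, Finset.sum_mul, Finset.sum_apply]
  rw [Finset.sum_comm]

lemma dotProduct_sum' {κ : Type} [Fintype κ] {ι : Type} (s : Finset ι) (v : κ → ℂ)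
    (w : ι → κ → ℂ) : v ⬝ᵥ (∑ i ∈ s, w i) = ∑ i ∈ s, v ⬝ᵥ w i := by
  simp only [dotProduct, Finset.sum_apply, Finset.mul_sum]
  rw [Finset.sum_comm]

lemma smul_posSemidef {ι : Type} [Fintype ι] [DecidableEq ι] {c : ℂ} (hc : 0 ≤ c)
    {M : Matrix ι ι ℂ} (hM : M.PosSemidef) : (c • M).PosSemidef := by
  refine Matrix.PosSemidef.of_dotProduct_mulVec_nonneg ?_ ?_
  · have hcs : star c = c := by
      rw [Complex.star_def, Complex.conj_eq_iff_im]
      exact (Complex.le_def.1 hc).2.symm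
    show (c • M)ᴴ = c • M
    rw [Matrix.conjTranspose_smul, hM.1, hcs]
  · intro x
    rw [Matrix.smul_mulVec]
    have := mul_nonneg hc (hM.dotProduct_mulVec_nonneg x)
    simpa [dotProduct_smul, smul_eq_mul] using this

lemma conjTranspose_mulVec_zero_of {ι : Type} [Fintype ι] {M : Matrix ι ι ℂ} {v : ι → ℂ}
    (h : (M * Mᴴ) *ᵥ v = 0) : Mᴴ *ᵥ v = 0 := by
  have h0 : star v ⬝ᵥ (M * Mᴴ) *ᵥ v = 0 := by rw [h, dotProduct_zero]
  rw [← Matrix.mulVec_mulVec, Matrix.dotProduct_mulVec (star v) M] at h0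
  have hsw : star ((Mᴴ) *ᵥ v) = Matrix.vecMul (star v) M := by
    rw [Matrix.star_mulVec, Matrix.conjTranspose_conjTranspose]
  rw [← hsw] at h0
  exact dotProduct_star_self_eq_zero.1 h0

lemma hstab_eq (T n : ℕ) :
    Hstab T n = Matrix.diagonal (fun p : (Fin T → Fin 2) × (Fin n → Fin 2) =>
      ∑ s ∈ Finset.range (T - 1),
        if h : s + 1 < T then
          (if p.1 ⟨s, Nat.lt_of_succ_lt h⟩ = 0 ∧ p.1 ⟨s + 1, h⟩ = 1 then (1 : ℂ) else 0)
        else 0) := by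
  unfold Hstab
  ext p r
  rw [Matrix.sum_apply]
  by_cases hpr : p = r
  · subst hpr
    simp only [Matrix.diagonal_apply_eq]
  · simp only [Matrix.diagonal_apply_ne _ hpr, Finset.sum_const_zero]

/-- the `X` operator whose `½ X Xᴴ` is a propagation term -/
def Xmat (T n : ℕ) (C : ℕ → Matrix (Fin n → Fin 2) (Fin n → Fin 2) ℂ) (a : Fin T) :
    Matrix ((Fin T → Fin 2) × (Fin n → Fin 2)) ((Fin T → Fin 2) × (Fin n → Fin 2)) ℂ :=
  kron (Aop T a) (C ((a : ℕ) + 1)) - kron ((Aop T a)ᴴ * Aop T a) 1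

lemma xmat_conjTranspose (T n : ℕ) (C : ℕ → Matrix (Fin n → Fin 2) (Fin n → Fin 2) ℂ)
    (a : Fin T) :
    (Xmat T n C a)ᴴ = kron (Aop T a)ᴴ (C ((a : ℕ) + 1))ᴴ - kron ((Aop T a)ᴴ * Aop T a) 1 := by
  unfold Xmat
  rw [Matrix.conjTranspose_sub, kron_conjTranspose, kron_conjTranspose,
    Matrix.conjTranspose_mul, Matrix.conjTranspose_conjTranspose, Matrix.conjTranspose_one]

lemma hprop_eq (T n : ℕ) (C : ℕ → Matrix (Fin n → Fin 2) (Fin n → Fin 2) ℂ)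
    (hCC : ∀ a : Fin T, C ((a : ℕ) + 1) * (C ((a : ℕ) + 1))ᴴ = 1) :
    Hprop T n C = ∑ a : Fin T, (1 / 2 : ℂ) • (Xmat T n C a * (Xmat T n C a)ᴴ) := by
  unfold Hprop
  refine Finset.sum_congr rfl fun a _ => ?_
  congr 1
  rw [xmat_conjTranspose]
  unfold Xmat
  rw [Matrix.sub_mul, Matrix.mul_sub, Matrix.mul_sub]
  rw [kron_mul, kron_mul, kron_mul, kron_mul]
  rw [hCC a, aop_mul_ahA, ahA_mul_aop_hA, ahA_mul_ahA, Matrix.mul_one, Matrix.one_mul,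
    Matrix.mul_one, kron_add_left]
  abel

lemma xmat_conjTranspose_mulVec (T n : ℕ) (C : ℕ → Matrix (Fin n → Fin 2) (Fin n → Fin 2) ℂ)
    (a : Fin T) (w : ((Fin T → Fin 2) × (Fin n → Fin 2)) → ℂ)
    (v' : Fin T → Fin 2) (b0 : Fin n → Fin 2) :
    ((Xmat T n C a)ᴴ *ᵥ w) (v', b0)
      = if Acond T a v' then
          (∑ b, star (C ((a : ℕ) + 1) b b0) * w (Function.update v' a 1, b)) - w (v', b0)
        else 0 := by
  rw [xmat_conjTranspose, Matrix.sub_mulVec]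
  have h2 : (kron ((Aop T a)ᴴ * Aop T a) (1 : Matrix (Fin n → Fin 2) (Fin n → Fin 2) ℂ) *ᵥ w)
      (v', b0) = if Acond T a v' then w (v', b0) else 0 := by
    rw [ahA, kron_diagonal_one]
    rw [Matrix.mulVec_diagonal]
    by_cases hc : Acond T a v' <;> simp [hc]
  have h1 : (kron (Aop T a)ᴴ (C ((a : ℕ) + 1))ᴴ *ᵥ w) (v', b0)
      = if Acond T a v' then
          (∑ b, star (C ((a : ℕ) + 1) b b0) * w (Function.update v' a 1, b)) else 0 := by
    show (∑ r : (Fin T → Fin 2) × (Fin n → Fin 2),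
        (Aop T a)ᴴ v' r.1 * (C ((a : ℕ) + 1))ᴴ b0 r.2 * w r) = _
    rw [Fintype.sum_prod_type]
    have hpt : ∀ u : Fin T → Fin 2,
        (∑ b : Fin n → Fin 2, (Aop T a)ᴴ v' u * (C ((a : ℕ) + 1))ᴴ b0 b * w (u, b))
        = if u = Function.update v' a 1 then
            (if Acond T a v' then
              (∑ b, star (C ((a : ℕ) + 1) b b0) * w (Function.update v' a 1, b)) else 0)
          else 0 := by
      intro u
      rw [conjTranspose_aop_apply]
      by_cases hu : u = Function.update v' a 1
      · by_cases hc : Acond T a v'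
        · rw [if_pos ⟨hu, hc⟩, if_pos hu, if_pos hc]
          subst hu
          exact Finset.sum_congr rfl fun b _ => by
            rw [one_mul, Matrix.conjTranspose_apply]
        · rw [if_neg (fun hh => hc hh.2), if_pos hu, if_neg hc]
          simp
      · rw [if_neg (fun hh => hu hh.1), if_neg hu]
        simp
    rw [Finset.sum_congr rfl (fun u _ => hpt u)]
    rw [Finset.sum_ite_eq' Finset.univ (Function.update v' a 1)]
    rw [if_pos (Finset.mem_univ _)]
  rw [Pi.sub_apply, h1, h2]
  by_cases hc : Acond T a v' <;> simp [hc]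

lemma historyState_apply_unary (T n m : ℕ) (hmn : m ≤ n)
    (C : ℕ → Matrix (Fin n → Fin 2) (Fin n → Fin 2) ℂ) (ξ : (Fin m → Fin 2) → ℂ)
    {t : ℕ} (ht : t ≤ T) (b : Fin n → Fin 2) :
    historyState T n m hmn C ξ (unaryClock T t, b)
      = (Real.sqrt (T + 1) : ℂ)⁻¹ * (prodMat C t).mulVec (inject n m hmn ξ) b := by
  unfold historyState
  congr 1
  rw [Finset.sum_eq_single t]
  · rw [if_pos rfl, one_mul]
  · intro t' ht' hne
    rw [if_neg, zero_mul]
    intro heq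
    exact hne (unaryClock_inj ht (Nat.lt_succ_iff.mp (Finset.mem_range.mp ht')) heq).symm
  · intro hmem
    exact absurd (Finset.mem_range.2 (by omega)) hmem

lemma historyState_apply_nonunary (T n m : ℕ) (hmn : m ≤ n)
    (C : ℕ → Matrix (Fin n → Fin 2) (Fin n → Fin 2) ℂ) (ξ : (Fin m → Fin 2) → ℂ)
    {u : Fin T → Fin 2} (hu : ∀ t ≤ T, u ≠ unaryClock T t) (b : Fin n → Fin 2) :
    historyState T n m hmn C ξ (u, b) = 0 := by
  unfold historyState
  rw [Finset.sum_eq_zero, mul_zero]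
  intro t ht
  rw [if_neg (hu t (Nat.lt_succ_iff.mp (Finset.mem_range.mp ht))), zero_mul]

end Main

/-- for `T ≥ 1`, `m ≤ n`, and unitaries `C_1, …, C_T` on `(ℂ²)^{⊗n}`, the
unary-clock Feynman–Kitaev Hamiltonian `H' = H_in + H_prop + H_stab` is positive
semidefinite and its kernel is exactly the set of history states `Ψ_ξ` of the circuit
`C_T⋯C_1` on inputs `ξ ⊗ |0⟩^{⊗(n-m)}`. -/
theorem feynman_kitaev_kernel (T n m : ℕ) (hT : 0 < T) (hmn : m ≤ n)
    (C : ℕ → Matrix (Fin n → Fin 2) (Fin n → Fin 2) ℂ)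
    (hC : ∀ t, 1 ≤ t → t ≤ T → C t ∈ Matrix.unitaryGroup (Fin n → Fin 2) ℂ) :
    (Hin T n m hT + Hprop T n C + Hstab T n).PosSemidef ∧
    ∀ v : ((Fin T → Fin 2) × (Fin n → Fin 2)) → ℂ,
      (Hin T n m hT + Hprop T n C + Hstab T n).mulVec v = 0 ↔
        ∃ ξ : (Fin m → Fin 2) → ℂ, v = historyState T n m hmn C ξ := by
  classical
  have hCC : ∀ a : Fin T, C ((a : ℕ) + 1) * (C ((a : ℕ) + 1))ᴴ = 1 := by
    intro a
    have h := Matrix.mem_unitaryGroup_iff.mp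
      (hC ((a : ℕ) + 1) (Nat.succ_le_succ (Nat.zero_le _)) (Nat.succ_le_of_lt a.isLt))
    rwa [Matrix.star_eq_conjTranspose] at h
  have hCC' : ∀ a : Fin T, (C ((a : ℕ) + 1))ᴴ * C ((a : ℕ) + 1) = 1 := by
    intro a
    have h := Matrix.mem_unitaryGroup_iff'.mp
      (hC ((a : ℕ) + 1) (Nat.succ_le_succ (Nat.zero_le _)) (Nat.succ_le_of_lt a.isLt))
    rwa [Matrix.star_eq_conjTranspose] at h
  have hprop : Hprop T n C = ∑ a : Fin T, (1 / 2 : ℂ) • (Xmat T n C a * (Xmat T n C a)ᴴ) :=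
    hprop_eq T n C hCC
  have hhalf : (0 : ℂ) ≤ 1 / 2 := by
    rw [Complex.le_def]
    norm_num
  have psd_in : (Hin T n m hT).PosSemidef := by
    unfold Hin
    refine Matrix.PosSemidef.diagonal (Pi.le_def.mpr fun p => ?_)
    simp only [Pi.zero_apply]
    split
    · rw [Complex.le_def]
      simp
    · exact le_refl 0
  have psd_stab : (Hstab T n).PosSemidef := by
    rw [hstab_eq]
    refine Matrix.PosSemidef.diagonal (Pi.le_def.mpr fun p => ?_)
    simp only [Pi.zero_apply]
    refine Finset.sum_nonneg fun s _ => ?_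
    split
    · split
      · rw [Complex.le_def]; simp
      · exact le_refl 0
    · exact le_refl 0
  have psd_term : ∀ a : Fin T, ((1 / 2 : ℂ) • (Xmat T n C a * (Xmat T n C a)ᴴ)).PosSemidef :=
    fun a => smul_posSemidef hhalf (Matrix.posSemidef_self_mul_conjTranspose _)
  have psd_prop : (Hprop T n C).PosSemidef := by
    rw [hprop]
    exact Finset.sum_induction _ _ (fun x y hx hy => hx.add hy) Matrix.PosSemidef.zero
      (fun a _ => psd_term a)
  have hsqrt : (Real.sqrt (T + 1) : ℂ) ≠ 0 := by
    simp only [ne_eq, Complex.ofReal_eq_zero]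
    exact Real.sqrt_ne_zero'.mpr (by positivity)
  refine ⟨(psd_in.add psd_prop).add psd_stab, fun v => ⟨?_, ?_⟩⟩
  · -- forward direction
    intro hv
    have h0 : (star v ⬝ᵥ (Hin T n m hT) *ᵥ v + star v ⬝ᵥ (Hprop T n C) *ᵥ v)
        + star v ⬝ᵥ (Hstab T n) *ᵥ v = 0 := by
      rw [← dotProduct_add, ← dotProduct_add, ← Matrix.add_mulVec,
        ← Matrix.add_mulVec, hv, dotProduct_zero]
    have hsplit1 := (add_eq_zero_iff_of_nonneg
      (add_nonneg (psd_in.dotProduct_mulVec_nonneg v) (psd_prop.dotProduct_mulVec_nonneg v))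
        (psd_stab.dotProduct_mulVec_nonneg v)).mp h0
    have hsplit2 := (add_eq_zero_iff_of_nonneg (psd_in.dotProduct_mulVec_nonneg v)
      (psd_prop.dotProduct_mulVec_nonneg v)).mp hsplit1.1
    have hin0 : (Hin T n m hT) *ᵥ v = 0 := (psd_in.dotProduct_mulVec_zero_iff v).mp hsplit2.1
    have hstab0 : (Hstab T n) *ᵥ v = 0 := (psd_stab.dotProduct_mulVec_zero_iff v).mp hsplit1.2
    have hprop0 : ∀ a : Fin T, (Xmat T n C a)ᴴ *ᵥ v = 0 := by
      intro a
      have hq : star v ⬝ᵥ (Hprop T n C) *ᵥ v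
          = ∑ a : Fin T, star v ⬝ᵥ ((1 / 2 : ℂ) • (Xmat T n C a * (Xmat T n C a)ᴴ)) *ᵥ v := by
        rw [hprop, sum_mulVec', dotProduct_sum']
      rw [hq] at hsplit2
      have hterm0 := (Finset.sum_eq_zero_iff_of_nonneg
        (fun a _ => (psd_term a).dotProduct_mulVec_nonneg v)).mp hsplit2.2 a (Finset.mem_univ a)
      have h1 : ((1 / 2 : ℂ) • (Xmat T n C a * (Xmat T n C a)ᴴ)) *ᵥ v = 0 :=
        ((psd_term a).dotProduct_mulVec_zero_iff v).mp hterm0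
      rw [Matrix.smul_mulVec] at h1
      have h2 : (Xmat T n C a * (Xmat T n C a)ᴴ) *ᵥ v = 0 := by
        rcases smul_eq_zero.mp h1 with h | h
        · norm_num at h
        · exact h
      exact conjTranspose_mulVec_zero_of h2
    rw [hstab_eq] at hstab0
    have fstab : ∀ u : Fin T → Fin 2, ∀ b, (¬ ∃ t ≤ T, u = unaryClock T t) → v (u, b) = 0 := by
      intro u b hu
      have hpat : ∃ s : ℕ, ∃ hs : s + 1 < T,
          u ⟨s, Nat.lt_of_succ_lt hs⟩ = 0 ∧ u ⟨s + 1, hs⟩ = 1 := by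
        by_contra hno
        push_neg at hno
        exact hu (isUnary_of_no01 (fun s hs hh => hno s hs hh.1 hh.2))
      obtain ⟨s, hs, hpat⟩ := hpat
      have hd : ((Matrix.diagonal (fun p : (Fin T → Fin 2) × (Fin n → Fin 2) =>
          ∑ s ∈ Finset.range (T - 1),
            if h : s + 1 < T then
              (if p.1 ⟨s, Nat.lt_of_succ_lt h⟩ = 0 ∧ p.1 ⟨s + 1, h⟩ = 1 then (1 : ℂ) else 0)
            else 0)) *ᵥ v) (u, b) = 0 := by rw [hstab0]; rfl
      rw [Matrix.mulVec_diagonal] at hd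
      rcases mul_eq_zero.mp hd with h | h
      · exfalso
        have hterm := (Finset.sum_eq_zero_iff_of_nonneg (fun s' _ => by
          split
          · split
            · exact zero_le_one
            · exact le_refl 0
          · exact le_refl 0)).mp h s (Finset.mem_range.2 (by omega))
        rw [dif_pos hs, if_pos hpat] at hterm
        exact one_ne_zero hterm
      · exact h
    have fin0 : ∀ b : Fin n → Fin 2,
        (¬ ∀ i : Fin n, m ≤ (i : ℕ) → b i = 0) → v (unaryClock T 0, b) = 0 := by
      intro b hb
      have hd : ((Matrix.diagonal (fun p : (Fin T → Fin 2) × (Fin n → Fin 2) =>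
          if p.1 ⟨0, hT⟩ = 0 then
            ((Finset.univ.filter (fun s : Fin n => m ≤ (s : ℕ) ∧ p.2 s = 1)).card : ℂ)
          else 0)) *ᵥ v) (unaryClock T 0, b) = 0 := by rw [← Hin]; rw [hin0]; rfl
      rw [Matrix.mulVec_diagonal] at hd
      have hz : ((unaryClock T 0, b) : (Fin T → Fin 2) × (Fin n → Fin 2)).1 ⟨0, hT⟩ = 0 :=
        (unaryClock_zero_iff (T := T) (t := 0) (⟨0, hT⟩ : Fin T)).2 (Nat.zero_le _)
      rw [if_pos hz] at hd
      rcases mul_eq_zero.mp hd with h | h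
      · exfalso
        push_neg at hb
        obtain ⟨i, him, hbi⟩ := hb
        have hbi1 : b i = 1 := by
          rcases fin2_cases (b i) with h' | h'
          · exact absurd h' hbi
          · exact h'
        have hmem : i ∈ Finset.univ.filter (fun s : Fin n => m ≤ (s : ℕ) ∧ b s = 1) :=
          Finset.mem_filter.2 ⟨Finset.mem_univ _, him, hbi1⟩
        exact Finset.card_ne_zero_of_mem hmem (Nat.cast_eq_zero.mp h)
      · exact h
    have fstep : ∀ a : Fin T, (fun b => v (unaryClock T ((a : ℕ) + 1), b))
        = (C ((a : ℕ) + 1)) *ᵥ (fun b => v (unaryClock T (a : ℕ), b)) := by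
      intro a
      have key : (C ((a : ℕ) + 1))ᴴ *ᵥ (fun b => v (unaryClock T ((a : ℕ) + 1), b))
          = (fun b0 => v (unaryClock T (a : ℕ), b0)) := by
        funext b0
        have he : ((Xmat T n C a)ᴴ *ᵥ v) (unaryClock T (a : ℕ), b0) = 0 := by
          rw [hprop0 a]; rfl
        rw [xmat_conjTranspose_mulVec, if_pos (acond_unaryClock_self a),
          update_unaryClock] at he
        have he' := sub_eq_zero.mp he
        show ∑ b, (C ((a : ℕ) + 1))ᴴ b0 b * v (unaryClock T ((a : ℕ) + 1), b) = _
        rw [← he']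
        exact Finset.sum_congr rfl fun b _ => by rw [Matrix.conjTranspose_apply]
      calc (fun b => v (unaryClock T ((a : ℕ) + 1), b))
          = ((C ((a : ℕ) + 1)) * (C ((a : ℕ) + 1))ᴴ)
              *ᵥ (fun b => v (unaryClock T ((a : ℕ) + 1), b)) := by
            rw [hCC a, Matrix.one_mulVec]
        _ = (C ((a : ℕ) + 1)) *ᵥ ((C ((a : ℕ) + 1))ᴴ
              *ᵥ (fun b => v (unaryClock T ((a : ℕ) + 1), b))) := by
            rw [Matrix.mulVec_mulVec]
        _ = _ := by rw [key]
    set v0 : (Fin n → Fin 2) → ℂ := fun b => v (unaryClock T 0, b) with hv0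
    have fprod : ∀ t : ℕ, t ≤ T → (prodMat C t) *ᵥ v0 = fun b => v (unaryClock T t, b) := by
      intro t
      induction t with
      | zero =>
        intro _
        show (1 : Matrix (Fin n → Fin 2) (Fin n → Fin 2) ℂ) *ᵥ v0 = _
        rw [Matrix.one_mulVec]
      | succ t ih =>
        intro ht
        have ht' : t < T := by omega
        show (C (t + 1) * prodMat C t) *ᵥ v0 = _
        rw [← Matrix.mulVec_mulVec, ih (by omega)]
        exact (fstep ⟨t, ht'⟩).symm
    refine ⟨fun j => (Real.sqrt (T + 1) : ℂ)
      * v0 (fun i => if h : (i : ℕ) < m then j ⟨(i : ℕ), h⟩ else 0), ?_⟩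
    have hinj : inject n m hmn (fun j => (Real.sqrt (T + 1) : ℂ)
        * v0 (fun i => if h : (i : ℕ) < m then j ⟨(i : ℕ), h⟩ else 0))
        = (Real.sqrt (T + 1) : ℂ) • v0 := by
      funext b
      unfold inject
      by_cases htail : ∀ i : Fin n, m ≤ (i : ℕ) → b i = 0
      · rw [if_pos htail]
        have harg : (fun i : Fin n => if h : (i : ℕ) < m then
            (fun j => b (Fin.castLE hmn j)) ⟨(i : ℕ), h⟩ else 0) = b := by
          funext i
          by_cases hi : (i : ℕ) < m
          · rw [dif_pos hi]
            exact congrArg b (Fin.ext rfl)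
          · rw [dif_neg hi]
            exact (htail i (by omega)).symm
        show (Real.sqrt (T + 1) : ℂ) * v0 (fun i : Fin n => if h : (i : ℕ) < m then
            (fun j => b (Fin.castLE hmn j)) ⟨(i : ℕ), h⟩ else 0)
          = ((Real.sqrt (T + 1) : ℂ) • v0) b
        rw [harg, Pi.smul_apply, smul_eq_mul]
      · rw [if_neg htail]
        have hz := fin0 b htail
        show (0 : ℂ) = ((Real.sqrt (T + 1) : ℂ) • v0) b
        rw [Pi.smul_apply, smul_eq_mul, show v0 b = 0 from hz, mul_zero]
    funext p
    obtain ⟨u, b⟩ := p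
    by_cases hu : ∃ t ≤ T, u = unaryClock T t
    · obtain ⟨t, ht, rfl⟩ := hu
      rw [historyState_apply_unary T n m hmn C _ ht b, hinj, Matrix.mulVec_smul, fprod t ht]
      rw [Pi.smul_apply, smul_eq_mul, ← mul_assoc, inv_mul_cancel₀ hsqrt, one_mul]
    · rw [historyState_apply_nonunary T n m hmn C _ (fun t ht heq => hu ⟨t, ht, heq⟩) b]
      exact fstab u b hu
  · -- backward direction
    rintro ⟨ξ, rfl⟩
    have hIn : (Hin T n m hT) *ᵥ historyState T n m hmn C ξ = 0 := by
      funext p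
      obtain ⟨u, b⟩ := p
      show ((Matrix.diagonal (fun p : (Fin T → Fin 2) × (Fin n → Fin 2) =>
          if p.1 ⟨0, hT⟩ = 0 then
            ((Finset.univ.filter (fun s : Fin n => m ≤ (s : ℕ) ∧ p.2 s = 1)).card : ℂ)
          else 0)) *ᵥ historyState T n m hmn C ξ) (u, b) = 0
      rw [Matrix.mulVec_diagonal]
      by_cases hz : u ⟨0, hT⟩ = 0
      swap
      · rw [if_neg hz, zero_mul]
      · rw [if_pos hz]
        by_cases hcard :
            (Finset.univ.filter (fun s : Fin n => m ≤ (s : ℕ) ∧ b s = 1)).card = 0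
        · rw [show ((((Finset.univ.filter
              (fun s : Fin n => m ≤ (s : ℕ) ∧ b s = 1)).card : ℕ)) : ℂ) = 0 by
              rw [hcard]; norm_num, zero_mul]
        · have hne : ∃ s : Fin n, m ≤ (s : ℕ) ∧ b s = 1 := by
            obtain ⟨s, hsmem⟩ := Finset.card_ne_zero.mp hcard
            exact ⟨s, (Finset.mem_filter.mp hsmem).2⟩
          have hhist : historyState T n m hmn C ξ (u, b) = 0 := by
            by_cases hu : ∃ t ≤ T, u = unaryClock T t
            · obtain ⟨t, ht, rfl⟩ := hu
              have ht0 : t = 0 := by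
                have h3 := (unaryClock_zero_iff (⟨0, hT⟩ : Fin T)).1 hz
                have h4 : t ≤ 0 := h3
                omega
              subst ht0
              rw [historyState_apply_unary T n m hmn C ξ (Nat.zero_le T) b]
              have h1 : (prodMat C 0) *ᵥ (inject n m hmn ξ) = inject n m hmn ξ := by
                show (1 : Matrix (Fin n → Fin 2) (Fin n → Fin 2) ℂ) *ᵥ _ = _
                rw [Matrix.one_mulVec]
              rw [h1]
              unfold inject
              rw [if_neg, mul_zero]
              intro hall
              obtain ⟨s, hms, hbs⟩ := hne
              rw [hall s hms] at hbs
              exact absurd hbs (by decide)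
            · exact historyState_apply_nonunary T n m hmn C ξ
                (fun t ht heq => hu ⟨t, ht, heq⟩) b
          rw [hhist, mul_zero]
    have hSt : (Hstab T n) *ᵥ historyState T n m hmn C ξ = 0 := by
      rw [hstab_eq]
      funext p
      obtain ⟨u, b⟩ := p
      show ((Matrix.diagonal _) *ᵥ historyState T n m hmn C ξ) (u, b) = 0
      rw [Matrix.mulVec_diagonal]
      by_cases hu : ∃ t ≤ T, u = unaryClock T t
      · obtain ⟨t, ht, rfl⟩ := hu
        refine mul_eq_zero.mpr (Or.inl (Finset.sum_eq_zero fun s hs => ?_))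
        have hlt : s + 1 < T := by
          have := Finset.mem_range.mp hs
          omega
        rw [dif_pos hlt, if_neg]
        exact unaryClock_no01 hlt
      · rw [historyState_apply_nonunary T n m hmn C ξ
          (fun t ht heq => hu ⟨t, ht, heq⟩) b, mul_zero]
    have hPr : (Hprop T n C) *ᵥ historyState T n m hmn C ξ = 0 := by
      rw [hprop, sum_mulVec']
      refine Finset.sum_eq_zero fun a _ => ?_
      have hXh : (Xmat T n C a)ᴴ *ᵥ historyState T n m hmn C ξ = 0 := by
        funext p
        obtain ⟨v', b0⟩ := p
        show ((Xmat T n C a)ᴴ *ᵥ historyState T n m hmn C ξ) (v', b0) = 0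
        rw [xmat_conjTranspose_mulVec]
        by_cases hc : Acond T a v'
        swap
        · rw [if_neg hc]
        · rw [if_pos hc]
          by_cases hv' : v' = unaryClock T (a : ℕ)
          · subst hv'
            rw [update_unaryClock]
            have ha1 : (a : ℕ) + 1 ≤ T := a.isLt
            rw [Finset.sum_congr rfl (fun b _ => by
              rw [historyState_apply_unary T n m hmn C ξ ha1 b])]
            rw [historyState_apply_unary T n m hmn C ξ (le_of_lt a.isLt) b0]
            rw [sub_eq_zero]
            have hstep : (prodMat C ((a : ℕ) + 1)) *ᵥ (inject n m hmn ξ)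
                = (C ((a : ℕ) + 1)) *ᵥ ((prodMat C (a : ℕ)) *ᵥ inject n m hmn ξ) := by
              show ((C ((a : ℕ) + 1)) * prodMat C (a : ℕ)) *ᵥ _ = _
              rw [← Matrix.mulVec_mulVec]
            rw [hstep]
            set w := (prodMat C (a : ℕ)) *ᵥ inject n m hmn ξ with hw
            have hcollect : (∑ b, star (C ((a : ℕ) + 1) b b0)
                  * ((Real.sqrt (T + 1) : ℂ)⁻¹ * ((C ((a : ℕ) + 1)) *ᵥ w) b))
                = (Real.sqrt (T + 1) : ℂ)⁻¹
                  * ∑ b, star (C ((a : ℕ) + 1) b b0) * (((C ((a : ℕ) + 1)) *ᵥ w) b) := by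
              rw [Finset.mul_sum]
              exact Finset.sum_congr rfl fun b _ => by ring
            rw [hcollect]
            congr 1
            have hsum : (∑ b, star (C ((a : ℕ) + 1) b b0) * (((C ((a : ℕ) + 1)) *ᵥ w) b))
                = ((C ((a : ℕ) + 1))ᴴ *ᵥ ((C ((a : ℕ) + 1)) *ᵥ w)) b0 := by
              show _ = ∑ b, (C ((a : ℕ) + 1))ᴴ b0 b * (((C ((a : ℕ) + 1)) *ᵥ w) b)
              exact Finset.sum_congr rfl fun b _ => by rw [Matrix.conjTranspose_apply]
            rw [hsum, Matrix.mulVec_mulVec, hCC' a, Matrix.one_mulVec]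
          · have hvne : ∀ t ≤ T, v' ≠ unaryClock T t := by
              intro t ht heq
              have ht2 := (acond_unaryClock_iff a ht).1 (heq ▸ hc)
              exact hv' (by rw [heq, ht2])
            have hune : ∀ t ≤ T, Function.update v' a 1 ≠ unaryClock T t :=
              fun t ht heq => hv' (acond_update_eq_unary hc heq ht).1
            rw [Finset.sum_congr rfl (fun b _ => by
              rw [historyState_apply_nonunary T n m hmn C ξ hune b, mul_zero]),
              historyState_apply_nonunary T n m hmn C ξ hvne b0]
            simp
      rw [Matrix.smul_mulVec, ← Matrix.mulVec_mulVec, hXh, Matrix.mulVec_zero, smul_zero]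
    rw [Matrix.add_mulVec, Matrix.add_mulVec, hIn, hSt, hPr]
    simp


end FK
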